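/- Let H be a finite forest whose vertex set is partitioned into active vertices V_a and inactive vertices V_i, where every inactive vertex has degree at least 2. Then the sum of the degrees of the active vertices is at most 2|V_a|. -/

import Mathlib

open SimpleGraph Walk Finset

lemma forest_edge_bound {V : Type*} [Fintype V] [Nonempty V] (G : SimpleGraph V)
    [DecidableRel G.Adj] (hG : G.IsAcyclic) :
    G.edgeFinset.card + 1 ≤ Fintype.card V := by
  classical
  set root : V → V := fun v => (G.connectedComponentMk v).out with hrootdef
  have hreach : ∀ v, G.Reachable v (root v) := fun v => by
    exact ConnectedComponent.exact (Quot.out_eq _).symm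
  have hrootadj : ∀ {x y : V}, G.Adj x y → root x = root y := fun {x y} h => by
    simp only [hrootdef]
    rw [ConnectedComponent.sound h.reachable]
  have hrootfix : ∀ v, root (root v) = root v := fun v => by
    simp only [hrootdef]
    congr 1
    exact Quot.out_eq _
  have hEU : ∀ v, ∃! p : G.Walk v (root v), p.IsPath := by
    intro v
    obtain ⟨w⟩ := hreach v
    exact ⟨w.toPath, w.toPath.2, fun p hp => Subtype.ext_iff.mp (hG.path_unique ⟨p, hp⟩ w.toPath)⟩
  choose f hf hf' using hEU
  -- if v = root v then f v has length 0
  have hnilroot : ∀ v, v = root v → (f v).length = 0 := by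
    intro v hv
    have h1 : (Walk.nil.copy rfl hv : G.Walk v (root v)) = f v :=
      hf' v (Walk.nil.copy rfl hv) (by simp)
    simp [← h1]
  have : Inhabited V := Classical.inhabited_of_nonempty ‹_›
  set g : V → Sym2 V := fun w => (f w).edges.headI with hgdef
  have key : ∀ ⦃x y : V⦄, G.Adj x y → (f x).length ≤ (f y).length →
      y ≠ root y ∧ g y = s(x, y) := by
    intro x y h h'
    have hrxy : root x = root y := hrootadj h
    have hyne : y ≠ root y := by
      intro hy
      have h0 : (f y).length = 0 := hnilroot y hy
      have h1 : (f x).length = 0 := le_antisymm (h0 ▸ h') (Nat.zero_le _)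
      have hx : x = root x := (f x).eq_of_length_eq_zero h1
      exact h.ne (hx.trans (hrxy.trans hy.symm))
    constructor
    · exact hyne
    · -- the walk cons h.symm (f x), copied to end at root y, is the unique path f y
      by_cases hmem : y ∈ (f x).support
      · exfalso
        -- takeUntil y of f x is a path from x to y; so is cons h nil; uniqueness
        have hxny : x ≠ y := h.ne
        have htake : (f x).takeUntil y hmem = Walk.cons h Walk.nil := by
          have h1 : ((f x).takeUntil y hmem).IsPath := (hf x).takeUntil hmem
          have h2 : (Walk.cons h Walk.nil : G.Walk x y).IsPath := by simp [h.ne]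
          exact Subtype.ext_iff.mp (hG.path_unique ⟨_, h1⟩ ⟨_, h2⟩)
        have hdrop : ((f x).dropUntil y hmem).IsPath := (hf x).dropUntil hmem
        have hfy : f y = ((f x).dropUntil y hmem).copy rfl hrxy :=
          (hf' y (((f x).dropUntil y hmem).copy rfl hrxy) (by simpa using hdrop)).symm
        have hlen : (f x).length = 1 + ((f x).dropUntil y hmem).length := by
          conv_lhs => rw [← (f x).take_spec hmem]
          rw [Walk.length_append, htake]
          simp
        have : (f y).length = ((f x).dropUntil y hmem).length := by simp [hfy]
        omega
      · have hq : ((Walk.cons h.symm (f x)).copy rfl hrxy).IsPath := by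
          rw [Walk.isPath_copy, Walk.cons_isPath_iff]
          exact ⟨hf x, hmem⟩
        have hfy : f y = (Walk.cons h.symm (f x)).copy rfl hrxy := (hf' y _ hq).symm
        simp only [hgdef, hfy, Walk.edges_copy, Walk.edges_cons, List.headI]
        exact Sym2.eq_swap
  -- injection edges → non-root vertices
  have hsurj : Set.SurjOn g ↑(univ.filter (fun v => v ≠ root v)) ↑G.edgeFinset := by
    rintro e he
    simp only [Finset.coe_filter, Set.mem_setOf_eq, Finset.mem_univ, true_and]
    induction e with
    | h x y =>
      simp only [mem_coe, mem_edgeFinset, SimpleGraph.mem_edgeSet] at he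
      rcases le_total (f x).length (f y).length with h' | h'
      · obtain ⟨h1, h2⟩ := key he h'
        exact ⟨y, h1, h2⟩
      · obtain ⟨h1, h2⟩ := key he.symm h'
        exact ⟨x, h1, by rw [h2, Sym2.eq_swap]⟩
  have hcard : G.edgeFinset.card ≤ (univ.filter (fun v => v ≠ root v)).card :=
    Finset.card_le_card_of_surjOn g hsurj
  have hr0 : root (Classical.arbitrary V) ∉ univ.filter (fun v => v ≠ root v) := by
    simp [hrootfix]
  have hne : (univ.filter (fun v => v ≠ root v)) ≠ univ := by
    intro hall
    have : root (Classical.arbitrary V) ∈ univ.filter (fun v => v ≠ root v) := by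
      rw [hall]; exact mem_univ _
    simp [hrootfix] at this
  have : (univ.filter (fun v => v ≠ root v)).card < Fintype.card V := by
    rw [← Finset.card_univ]
    exact Finset.card_lt_card (Finset.ssubset_univ_iff.mpr hne)
  omega

theorem stmt2 {V : Type*} [Fintype V] (H : SimpleGraph V)
    [DecidableRel H.Adj] (hH : H.IsAcyclic)
    (Va Vi : Finset V) (hpart : ∀ v, v ∈ Va ↔ v ∉ Vi)
    (hdeg : ∀ v ∈ Vi, 2 ≤ H.degree v) :
    ∑ v ∈ Va, H.degree v ≤ 2 * Va.card := by
  classical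
  have hVa : Va = Viᶜ := by
    ext v; simp [hpart v]
  cases isEmpty_or_nonempty V with
  | inl h =>
    simp [Finset.eq_empty_of_isEmpty Va]
  | inr h =>
    have hedge : H.edgeFinset.card + 1 ≤ Fintype.card V := forest_edge_bound H hH
    have hsum : ∑ v ∈ Va, H.degree v + ∑ v ∈ Vi, H.degree v = 2 * H.edgeFinset.card := by
      rw [← H.sum_degrees_eq_twice_card_edges, hVa]
      rw [Finset.sum_compl_add_sum]
    have hVi : 2 * Vi.card ≤ ∑ v ∈ Vi, H.degree v := by
      calc 2 * Vi.card = ∑ _v ∈ Vi, 2 := by rw [Finset.sum_const, smul_eq_mul, mul_comm]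
        _ ≤ ∑ v ∈ Vi, H.degree v := Finset.sum_le_sum hdeg
    have hcards : Va.card + Vi.card = Fintype.card V := by
      rw [hVa, Finset.card_compl]
      have := Finset.card_le_univ Vi
      omega
    omega
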